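/- Let X be a set, b > 0, and let (φ_ℓ)_{ℓ≥1} be real-valued functions on X satisfying |φ_ℓ(x)| ≤ b ℓ² for all x ∈ X and all ℓ ≥ 1. Let s > 3 and let (c_ℓ)_{ℓ≥1} be real coefficients with ‖f‖_s² := Σ_{ℓ=1}^∞ c_ℓ² ℓ^{2s} < ∞, and set ‖f‖₂² := Σ_{ℓ=1}^∞ c_ℓ². Then for every x ∈ X the series f(x) = Σ_{ℓ=1}^∞ c_ℓ φ_ℓ(x) converges absolutely and satisfies the interpolation inequality |f(x)| ≤ (π/√6) · b · ‖f‖_s^{3/s} · ‖f‖₂^{1−3/s}; in particular sup_{x∈X} |f(x)| ≤ (π/√6) b ‖f‖_s^{3/s} ‖f‖₂^{1−3/s}. -/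

import Mathlib

open Real


/-- Interpolation inequality: if `|φ_ℓ(x)| ≤ b ℓ²` for all `ℓ ≥ 1` and
`‖f‖_s² = ∑_{ℓ≥1} c_ℓ² ℓ^{2s} < ∞` with `s > 3`, then for every `x` the series
`f(x) = ∑_{ℓ≥1} c_ℓ φ_ℓ(x)` converges absolutely and
`|f(x)| ≤ (π/√6) · b · ‖f‖_s^{3/s} · ‖f‖₂^{1−3/s}`. -/
theorem interpolation_inequality
    {X : Type*} (b : ℝ) (hb : 0 < b)
    (φ : ℕ → X → ℝ) (c : ℕ → ℝ) (s : ℝ) (hs : 3 < s)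
    (hφ : ∀ ℓ : ℕ, 1 ≤ ℓ → ∀ x : X, |φ ℓ x| ≤ b * (ℓ : ℝ) ^ 2)
    (hsum : Summable (fun ℓ : ℕ => (c (ℓ + 1)) ^ 2 * ((ℓ + 1 : ℕ) : ℝ) ^ (2 * s)))
    (Ns N2 : ℝ)
    (hNs : Ns = Real.sqrt (∑' ℓ : ℕ, (c (ℓ + 1)) ^ 2 * ((ℓ + 1 : ℕ) : ℝ) ^ (2 * s)))
    (hN2 : N2 = Real.sqrt (∑' ℓ : ℕ, (c (ℓ + 1)) ^ 2))
    (x : X) :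
    Summable (fun ℓ : ℕ => |c (ℓ + 1) * φ (ℓ + 1) x|) ∧
      |∑' ℓ : ℕ, c (ℓ + 1) * φ (ℓ + 1) x|
        ≤ (Real.pi / Real.sqrt 6) * b * Ns ^ ((3 : ℝ) / s) * N2 ^ (1 - 3 / s) := by
  have hs0 : 0 < s := by linarith
  have hs3 : (0:ℝ) < s - 3 := by linarith
  set n : ℕ → ℝ := fun ℓ => ((ℓ + 1 : ℕ) : ℝ) with hn
  have hn1 : ∀ ℓ : ℕ, (1:ℝ) ≤ n ℓ := by
    intro ℓ; simp only [hn]; push_cast; linarith [Nat.cast_nonneg (α := ℝ) ℓ]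
  have hn0 : ∀ ℓ : ℕ, (0:ℝ) < n ℓ := fun ℓ => lt_of_lt_of_le one_pos (hn1 ℓ)
  set A := ∑' ℓ : ℕ, (c (ℓ + 1)) ^ 2 * n ℓ ^ (2 * s) with hAdef
  set B := ∑' ℓ : ℕ, (c (ℓ + 1)) ^ 2 with hBdef
  have hA0 : 0 ≤ A := tsum_nonneg fun ℓ => by positivity
  have hB0 : 0 ≤ B := tsum_nonneg fun ℓ => by positivity
  have hsum2 : Summable (fun ℓ : ℕ => (c (ℓ + 1)) ^ 2) := by
    refine hsum.of_nonneg_of_le (fun ℓ => sq_nonneg _) (fun ℓ => ?_)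
    have h1 : (1:ℝ) ≤ n ℓ ^ (2 * s) := by
      calc (1:ℝ) = n ℓ ^ (0:ℝ) := (rpow_zero _).symm
      _ ≤ n ℓ ^ (2 * s) := rpow_le_rpow_of_exponent_le (hn1 ℓ) (by linarith)
    nlinarith [sq_nonneg (c (ℓ + 1))]
  have hsum6 : Summable (fun ℓ : ℕ => (c (ℓ + 1)) ^ 2 * n ℓ ^ (6:ℝ)) := by
    refine hsum.of_nonneg_of_le (fun ℓ => by positivity) (fun ℓ => ?_)
    have h1 : n ℓ ^ (6:ℝ) ≤ n ℓ ^ (2 * s) :=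
      rpow_le_rpow_of_exponent_le (hn1 ℓ) (by linarith)
    nlinarith [sq_nonneg (c (ℓ + 1))]
  set C := ∑' ℓ : ℕ, (c (ℓ + 1)) ^ 2 * n ℓ ^ (6:ℝ) with hCdef
  have hC0 : 0 ≤ C := tsum_nonneg fun ℓ => by positivity
  -- Hölder : C ≤ A ^ (3/s) * B ^ ((s-3)/s)
  have hpq : Real.HolderConjugate (s / 3) (s / (s - 3)) := by
    refine ⟨?_, by positivity, by positivity⟩
    rw [inv_div, inv_div, ← add_div, add_sub_cancel, div_self hs0.ne', inv_one]
  have key1 : ∀ ℓ : ℕ, (((c (ℓ+1))^2 * n ℓ ^ (2*s)) ^ ((3:ℝ)/s)) ^ (s/3)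
      = (c (ℓ+1))^2 * n ℓ ^ (2*s) := by
    intro ℓ
    rw [← Real.rpow_mul (by positivity), show (3:ℝ)/s*(s/3) = 1 by field_simp, rpow_one]
  have key2 : ∀ ℓ : ℕ, (((c (ℓ+1))^2) ^ ((s-3)/s)) ^ (s/(s-3)) = (c (ℓ+1))^2 := by
    intro ℓ
    rw [← Real.rpow_mul (by positivity), show (s-3)/s*(s/(s-3)) = 1 by field_simp, rpow_one]
  have key3 : ∀ ℓ : ℕ, (((c (ℓ+1))^2 * n ℓ ^ (2*s)) ^ ((3:ℝ)/s))
      * (((c (ℓ+1))^2) ^ ((s-3)/s)) = (c (ℓ+1))^2 * n ℓ ^ (6:ℝ) := by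
    intro ℓ
    rw [Real.mul_rpow (by positivity) (by positivity)]
    rw [← Real.rpow_mul (hn0 ℓ).le, show (2*s)*((3:ℝ)/s) = 6 by field_simp; ring]
    rw [mul_right_comm, ← Real.rpow_add' (by positivity)
      (by rw [show (3:ℝ)/s + (s-3)/s = 1 by (field_simp; ring)]; norm_num)]
    rw [show (3:ℝ)/s + (s-3)/s = 1 by (field_simp; ring), rpow_one]
  have holder := Real.summable_and_inner_le_Lp_mul_Lq_tsum_of_nonneg (p := s/3) (q := s/(s-3))
    (f := fun ℓ => ((c (ℓ + 1)) ^ 2 * n ℓ ^ (2 * s)) ^ ((3:ℝ) / s))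
    (g := fun ℓ => ((c (ℓ + 1)) ^ 2) ^ ((s - 3) / s)) hpq
    (fun ℓ => by positivity) (fun ℓ => by positivity)
    ((summable_congr key1).mpr hsum) ((summable_congr key2).mpr hsum2)
  have hCle : C ≤ A ^ ((3:ℝ)/s) * B ^ ((s-3)/s) := by
    have h2 := holder.2
    rw [tsum_congr key3, tsum_congr key1, tsum_congr key2] at h2
    rwa [one_div_div, one_div_div] at h2
  -- Cauchy-Schwarz : T ≤ C^{1/2} * Z^{1/2}
  have h22 : Real.HolderConjugate 2 2 := by constructor <;> norm_num
  have keyf : ∀ ℓ : ℕ, (|c (ℓ+1)| * n ℓ ^ (3:ℝ)) ^ ((2:ℝ))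
      = (c (ℓ+1))^2 * n ℓ ^ (6:ℝ) := by
    intro ℓ
    rw [Real.mul_rpow (abs_nonneg _) (by positivity),
      ← Real.rpow_mul (hn0 ℓ).le, show (3:ℝ)*2 = 6 by norm_num,
      Real.rpow_two, sq_abs]
  have keyg : ∀ ℓ : ℕ, ((n ℓ)⁻¹) ^ ((2:ℝ)) = 1 / ((ℓ+1 : ℕ) : ℝ)^2 := by
    intro ℓ
    rw [Real.rpow_two]
    simp [hn]
  have hZsum : Summable (fun ℓ : ℕ => (1:ℝ) / ((ℓ+1 : ℕ) : ℝ)^2) := by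
    have := hasSum_zeta_two.summable
    exact_mod_cast (summable_nat_add_iff 1).mpr this
  have hZval : ∑' ℓ : ℕ, (1:ℝ) / ((ℓ+1 : ℕ) : ℝ)^2 = π^2/6 := by
    have h0 := hasSum_zeta_two
    have := Summable.tsum_eq_zero_add h0.summable
    rw [h0.tsum_eq] at this
    simp only [Nat.cast_zero, ne_eq, OfNat.ofNat_ne_zero, not_false_eq_true, zero_pow,
      div_zero, zero_add] at this
    push_cast
    push_cast at this
    linarith [this]
  have cs := Real.summable_and_inner_le_Lp_mul_Lq_tsum_of_nonneg (p := 2) (q := 2)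
    (f := fun ℓ => |c (ℓ + 1)| * n ℓ ^ (3:ℝ))
    (g := fun ℓ => (n ℓ)⁻¹) h22
    (fun ℓ => by positivity) (fun ℓ => by positivity)
    ((summable_congr keyf).mpr hsum6) ((summable_congr keyg).mpr hZsum)
  have keyfg : ∀ ℓ : ℕ, (|c (ℓ+1)| * n ℓ ^ (3:ℝ)) * (n ℓ)⁻¹ = |c (ℓ+1)| * n ℓ ^ (2:ℝ) := by
    intro ℓ
    rw [mul_assoc, ← Real.rpow_neg_one (n ℓ), ← Real.rpow_add (hn0 ℓ)]
    norm_num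
  have hTsum : Summable (fun ℓ : ℕ => |c (ℓ+1)| * n ℓ ^ (2:ℝ)) :=
    (summable_congr keyfg).mp cs.1
  have hTle : ∑' ℓ : ℕ, |c (ℓ+1)| * n ℓ ^ (2:ℝ)
      ≤ C ^ ((1:ℝ)/2) * (π^2/6) ^ ((1:ℝ)/2) := by
    have h2 := cs.2
    rw [tsum_congr keyfg, tsum_congr keyf, tsum_congr keyg, hZval] at h2
    exact h2
  set T := ∑' ℓ : ℕ, |c (ℓ+1)| * n ℓ ^ (2:ℝ) with hTdef
  have hT0 : 0 ≤ T := tsum_nonneg fun ℓ => by positivity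
  -- computing (π²/6)^{1/2} = π/√6
  have hpi : (π^2/6 : ℝ) ^ ((1:ℝ)/2) = π / Real.sqrt 6 := by
    rw [← Real.sqrt_eq_rpow, Real.sqrt_div (sq_nonneg π), Real.sqrt_sq pi_nonneg]
  -- bound C^{1/2} by Ns^{3/s} * N2^{1-3/s}
  have hCbound : C ^ ((1:ℝ)/2) ≤ Ns ^ ((3:ℝ)/s) * N2 ^ (1 - 3/s) := by
    have h1 : C ^ ((1:ℝ)/2) ≤ (A ^ ((3:ℝ)/s) * B ^ ((s-3)/s)) ^ ((1:ℝ)/2) :=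
      Real.rpow_le_rpow hC0 hCle (by norm_num)
    refine h1.trans_eq ?_
    rw [Real.mul_rpow (by positivity) (by positivity),
      hNs, hN2, Real.sqrt_eq_rpow, Real.sqrt_eq_rpow,
      ← Real.rpow_mul hA0, ← Real.rpow_mul hB0,
      ← Real.rpow_mul hA0, ← Real.rpow_mul hB0]
    rw [show (3:ℝ)/s * (1/2) = 1/2 * (3/s) by ring,
      show (s-3)/s * ((1:ℝ)/2) = 1/2 * (1 - 3/s) by rw [sub_div, div_self hs0.ne']; ring]
  -- final assembly
  have hbound : ∀ ℓ : ℕ, |c (ℓ + 1) * φ (ℓ + 1) x| ≤ b * (|c (ℓ+1)| * n ℓ ^ (2:ℝ)) := by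
    intro ℓ
    rw [abs_mul]
    have := hφ (ℓ+1) (Nat.le_add_left 1 ℓ) x
    have h2 : n ℓ ^ (2:ℝ) = ((ℓ+1 : ℕ) : ℝ)^2 := by
      rw [Real.rpow_two]
    calc |c (ℓ+1)| * |φ (ℓ+1) x| ≤ |c (ℓ+1)| * (b * ((ℓ+1:ℕ):ℝ)^2) := by
          exact mul_le_mul_of_nonneg_left (by exact_mod_cast this) (abs_nonneg _)
    _ = b * (|c (ℓ+1)| * n ℓ ^ (2:ℝ)) := by rw [h2]; ring
  have hsumabs : Summable (fun ℓ : ℕ => |c (ℓ + 1) * φ (ℓ + 1) x|) := by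
    refine (hTsum.mul_left b).of_nonneg_of_le (fun ℓ => abs_nonneg _) hbound
  refine ⟨hsumabs, ?_⟩
  have habs : |∑' ℓ : ℕ, c (ℓ + 1) * φ (ℓ + 1) x| ≤ ∑' ℓ : ℕ, |c (ℓ + 1) * φ (ℓ + 1) x| := by
    have h := norm_tsum_le_tsum_norm (f := fun ℓ : ℕ => c (ℓ + 1) * φ (ℓ + 1) x)
      (by simpa only [Real.norm_eq_abs] using hsumabs)
    simpa only [Real.norm_eq_abs] using h
  calc |∑' ℓ : ℕ, c (ℓ + 1) * φ (ℓ + 1) x|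
      ≤ ∑' ℓ : ℕ, |c (ℓ + 1) * φ (ℓ + 1) x| := habs
    _ ≤ ∑' ℓ : ℕ, b * (|c (ℓ+1)| * n ℓ ^ (2:ℝ)) :=
        Summable.tsum_le_tsum hbound hsumabs (hTsum.mul_left b)
    _ = b * T := by rw [tsum_mul_left]
    _ ≤ b * (C ^ ((1:ℝ)/2) * (π / Real.sqrt 6)) := by
        rw [← hpi]; exact mul_le_mul_of_nonneg_left hTle hb.le
    _ ≤ b * ((Ns ^ ((3:ℝ)/s) * N2 ^ (1 - 3/s)) * (π / Real.sqrt 6)) := by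
        have hπ : 0 ≤ π / Real.sqrt 6 := by positivity
        exact mul_le_mul_of_nonneg_left (mul_le_mul_of_nonneg_right hCbound hπ) hb.le
    _ = (π / Real.sqrt 6) * b * Ns ^ ((3:ℝ)/s) * N2 ^ (1 - 3/s) := by ring
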